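/- Let ρ_i = γ_i·A_i with γ_i > 0 and A_i > 0 for i = 1,…,K, and let N > 0. Then the minimum over probability weight vectors w (w_i > 0, Σw_i = 1) of (C/√N)·Σ_i ρ_i/√(w_i) equals (C/√N)·(Σ_i (γ_i A_i)^{2/3})^{3/2}, for any constant C > 0. -/
import Mathlib

open Finset

theorem minimized_generalization_bound (K : ℕ) (hK : 0 < K)
    (γ A : Fin K → ℝ) (hγ : ∀ i, 0 < γ i) (hA : ∀ i, 0 < A i)
    (C N : ℝ) (hC : 0 < C) (hN : 0 < N) :
    IsLeast
      {y : ℝ | ∃ w : Fin K → ℝ, (∀ i, 0 < w i) ∧ (∑ i, w i) = 1 ∧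
        y = (C / Real.sqrt N) * ∑ i, (γ i * A i) / Real.sqrt (w i)}
      ((C / Real.sqrt N) * (∑ i, (γ i * A i) ^ ((2:ℝ)/3)) ^ ((3:ℝ)/2)) := by
  have : Nonempty (Fin K) := ⟨⟨0, hK⟩⟩
  set ρ : Fin K → ℝ := fun i => γ i * A i with hρdef
  have hρ : ∀ i, 0 < ρ i := fun i => mul_pos (hγ i) (hA i)
  set S : ℝ := ∑ i, ρ i ^ ((2:ℝ)/3) with hSdef
  have hS : 0 < S := Finset.sum_pos (fun i _ => Real.rpow_pos_of_pos (hρ i) _) univ_nonempty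
  constructor
  · refine ⟨fun i => ρ i ^ ((2:ℝ)/3) / S, fun i => div_pos (Real.rpow_pos_of_pos (hρ i) _) hS, ?_, ?_⟩
    · rw [← Finset.sum_div, ← hSdef, div_self hS.ne']
    · congr 1
      have hterm : ∀ i, ρ i / Real.sqrt (ρ i ^ ((2:ℝ)/3) / S) = ρ i ^ ((2:ℝ)/3) * S ^ ((1:ℝ)/2) := by
        intro i
        rw [Real.sqrt_eq_rpow, Real.div_rpow (Real.rpow_nonneg (hρ i).le _) hS.le,
          ← Real.rpow_mul (hρ i).le]
        have h13 : (2:ℝ)/3 * (1/2) = 1/3 := by norm_num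
        rw [h13, div_div_eq_mul_div, div_eq_iff (Real.rpow_pos_of_pos (hρ i) _).ne',
          mul_right_comm (ρ i ^ ((2:ℝ)/3)) (S ^ ((1:ℝ)/2)) (ρ i ^ ((1:ℝ)/3)),
          ← Real.rpow_add (hρ i)]
        norm_num
      rw [Finset.sum_congr rfl (fun i _ => hterm i), ← Finset.sum_mul, ← hSdef,
        show (3:ℝ)/2 = 1 + 1/2 by norm_num, Real.rpow_add hS, Real.rpow_one]
  · rintro y ⟨w, hw, hsum, rfl⟩
    have hT : (0:ℝ) < ∑ i, ρ i / Real.sqrt (w i) :=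
      Finset.sum_pos (fun i _ => div_pos (hρ i) (Real.sqrt_pos.mpr (hw i))) univ_nonempty
    have key : S ≤ (∑ i, ρ i / Real.sqrt (w i)) ^ ((2:ℝ)/3) := by
      have hpq : Real.HolderConjugate (3/2) 3 := by constructor <;> norm_num
      have H := Real.inner_le_Lp_mul_Lq_of_nonneg univ hpq
        (f := fun i => (ρ i / Real.sqrt (w i)) ^ ((2:ℝ)/3))
        (g := fun i => (w i) ^ ((1:ℝ)/3))
        (fun i _ => Real.rpow_nonneg (div_pos (hρ i) (Real.sqrt_pos.mpr (hw i))).le _)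
        (fun i _ => Real.rpow_nonneg (hw i).le _)
      have e1 : ∀ i : Fin K, (ρ i / Real.sqrt (w i)) ^ ((2:ℝ)/3) * (w i) ^ ((1:ℝ)/3)
          = ρ i ^ ((2:ℝ)/3) := by
        intro i
        rw [Real.div_rpow (hρ i).le (Real.sqrt_nonneg _), Real.sqrt_eq_rpow,
          ← Real.rpow_mul (hw i).le]
        have h13 : (1:ℝ)/2 * (2/3) = 1/3 := by norm_num
        rw [h13, div_mul_cancel₀ _ (Real.rpow_pos_of_pos (hw i) _).ne']
      have e2 : ∀ i : Fin K, ((ρ i / Real.sqrt (w i)) ^ ((2:ℝ)/3)) ^ ((3:ℝ)/2)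
          = ρ i / Real.sqrt (w i) := by
        intro i
        rw [← Real.rpow_mul (div_pos (hρ i) (Real.sqrt_pos.mpr (hw i))).le]
        norm_num
      have e3 : ∀ i : Fin K, ((w i) ^ ((1:ℝ)/3)) ^ (3:ℝ) = w i := by
        intro i
        rw [← Real.rpow_mul (hw i).le]
        norm_num
      simp only [e1] at H
      calc S ≤ (∑ i, ((ρ i / Real.sqrt (w i)) ^ ((2:ℝ)/3)) ^ ((3:ℝ)/2)) ^ (1/(3/2:ℝ))
            * (∑ i, ((w i) ^ ((1:ℝ)/3)) ^ (3:ℝ)) ^ (1/(3:ℝ)) := H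
        _ = (∑ i, ρ i / Real.sqrt (w i)) ^ ((2:ℝ)/3) := by
            rw [Finset.sum_congr rfl (fun i _ => e2 i), Finset.sum_congr rfl (fun i _ => e3 i),
              hsum, Real.one_rpow, mul_one]
            norm_num
    have hfin : S ^ ((3:ℝ)/2) ≤ ∑ i, ρ i / Real.sqrt (w i) := by
      calc S ^ ((3:ℝ)/2) ≤ ((∑ i, ρ i / Real.sqrt (w i)) ^ ((2:ℝ)/3)) ^ ((3:ℝ)/2) :=
            Real.rpow_le_rpow hS.le key (by norm_num)
        _ = ∑ i, ρ i / Real.sqrt (w i) := by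
            rw [← Real.rpow_mul hT.le]; norm_num
    exact mul_le_mul_of_nonneg_left hfin (div_nonneg hC.le (Real.sqrt_nonneg _))
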